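/- arXiv:2002.08693 — 2 statements merged into one kernel-verified Lean document; each statement's English description precedes it below -/
import Mathlib

section
/- Let P be a finite set of n points in ℝ² in general position. Then there exist two points p₁, p₂ ∈ ℝ² such that every axis-parallel box containing more than (3/7)·n points of P contains at least one of p₁, p₂, and every axis-parallel box containing more than (4/7)·n points of P contains both p₁ and p₂. -/
/-- `B` is a compact axis-parallel box in `ℝ²`: a product of closed intervals. -/
def IsBox (B : Set (EuclideanSpace ℝ (Fin 2))) : Prop :=
  ∃ a b : Fin 2 → ℝ, B = {x | ∀ i, x i ∈ Set.Icc (a i) (b i)}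

/-- Number of points of the finite set `P` lying in the set `C`. -/
noncomputable def ptsIn (P : Finset (EuclideanSpace ℝ (Fin 2)))
    (C : Set (EuclideanSpace ℝ (Fin 2))) : ℕ :=
  ((P : Set (EuclideanSpace ℝ (Fin 2))) ∩ C).ncard

/-- General position with respect to axis-parallel boxes: distinct points of `P`
differ in every coordinate. -/
def GeneralPositionBoxes (P : Finset (EuclideanSpace ℝ (Fin 2))) : Prop :=
  ∀ p ∈ P, ∀ q ∈ P, p ≠ q → ∀ i, p i ≠ q i

open Finset
open Classical in
noncomputable def cnt {α : Type*} (S : Finset α) (q : α → Prop) : ℕ := (S.filter q).card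

namespace CntAux
variable {α : Type*} {S : Finset α} {q r t : α → Prop}

open Classical in
lemma cnt_eq (inst : DecidablePred q) : cnt S q = (@Finset.filter _ q inst S).card := by
  unfold cnt; congr 1; ext p; simp [Finset.mem_filter]

open Classical in
lemma cnt_filter_eq (inst : DecidablePred r) :
    cnt (@Finset.filter _ r inst S) q = cnt S (fun p => r p ∧ q p) := by
  unfold cnt; congr 1; ext p; simp [Finset.mem_filter, and_assoc]

open Classical in
lemma cnt_mono (h : ∀ p ∈ S, q p → r p) : cnt S q ≤ cnt S r := by
  apply Finset.card_le_card
  intro p hp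
  rw [Finset.mem_filter] at hp ⊢
  exact ⟨hp.1, h p hp.1 hp.2⟩

open Classical in
lemma cnt_le_card : cnt S q ≤ S.card := Finset.card_le_card (Finset.filter_subset _ _)

open Classical in
lemma cnt_congr (h : ∀ p ∈ S, q p ↔ r p) : cnt S q = cnt S r :=
  le_antisymm (cnt_mono fun p hp => (h p hp).1) (cnt_mono fun p hp => (h p hp).2)

open Classical in
lemma cnt_compl : cnt S q + cnt S (fun p => ¬ q p) = S.card := by
  rw [cnt_eq (Classical.decPred q), cnt_eq (fun a => instDecidableNot)]
  exact Finset.card_filter_add_card_filter_not (s := S) (p := q)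

open Classical in
lemma cnt_two (h : ∀ p ∈ S, ¬(q p ∧ r p)) : cnt S q + cnt S r ≤ S.card := by
  have hle : cnt S r ≤ cnt S (fun p => ¬ q p) := cnt_mono (fun p hp hr hq => h p hp ⟨hq, hr⟩)
  have := cnt_compl (S := S) (q := q)
  omega

open Classical in
lemma cnt_cover2 (h : ∀ p ∈ S, q p ∨ r p) : S.card ≤ cnt S q + cnt S r := by
  have hle : cnt S (fun p => ¬ q p) ≤ cnt S r := cnt_mono (fun p hp hq => (h p hp).resolve_left hq)
  have := cnt_compl (S := S) (q := q)
  omega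

open Classical in
lemma cnt_three (hqr : ∀ p ∈ S, ¬(q p ∧ r p)) (hqt : ∀ p ∈ S, ¬(q p ∧ t p))
    (hrt : ∀ p ∈ S, ¬(r p ∧ t p)) : cnt S q + cnt S r + cnt S t ≤ S.card := by
  have e1 : cnt (S.filter (fun p => ¬ q p)) r = cnt S r :=
    (cnt_filter_eq _).trans
      (cnt_congr (fun p hp => ⟨fun h => h.2, fun hr => ⟨fun hq => hqr p hp ⟨hq, hr⟩, hr⟩⟩))
  have e2 : cnt (S.filter (fun p => ¬ q p)) t = cnt S t :=
    (cnt_filter_eq _).trans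
      (cnt_congr (fun p hp => ⟨fun h => h.2, fun ht => ⟨fun hq => hqt p hp ⟨hq, ht⟩, ht⟩⟩))
  have h2 : cnt (S.filter (fun p => ¬ q p)) r + cnt (S.filter (fun p => ¬ q p)) t
      ≤ (S.filter (fun p => ¬ q p)).card :=
    cnt_two (fun p hp => hrt p (Finset.mem_filter.mp hp).1)
  have h3 : (S.filter (fun p => ¬ q p)).card = cnt S (fun p => ¬ q p) := (cnt_eq _).symm
  have := cnt_compl (S := S) (q := q)
  omega

open Classical in
lemma cnt_empty_pred (h : ∀ p ∈ S, ¬ q p) : cnt S q = 0 := by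
  unfold cnt
  rw [Finset.card_eq_zero, Finset.filter_eq_empty_iff]
  exact h

open Classical in
lemma cnt_singleton_pred {m : α} (hm : m ∈ S) (h : ∀ p ∈ S, q p ↔ p = m) : cnt S q = 1 := by
  unfold cnt
  rw [Finset.card_eq_one]
  refine ⟨m, ?_⟩
  ext p
  simp only [Finset.mem_filter, Finset.mem_singleton]
  constructor
  · rintro ⟨hp, hq⟩; exact (h p hp).1 hq
  · intro hpm
    refine ⟨hpm ▸ hm, hpm ▸ ((h m hm).2 rfl)⟩

open Classical in
lemma cnt_insert_true {m : α} (hm : m ∉ S) (hq : q m) :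
    cnt (insert m S) q = cnt S q + 1 := by
  unfold cnt
  rw [Finset.filter_insert, if_pos hq, Finset.card_insert_of_notMem]
  simp [Finset.mem_filter, hm]

open Classical in
lemma exists_kth (f : α → ℝ) :
    ∀ (k : ℕ) (S : Finset α), (∀ p ∈ S, ∀ q ∈ S, p ≠ q → f p ≠ f q) →
    1 ≤ k → k ≤ S.card →
    ∃ p ∈ S, cnt S (fun q => f q < f p) + 1 = k ∧ cnt S (fun q => f q ≤ f p) = k := by
  intro k
  induction k with
  | zero => omega
  | succ k ih =>
    intro S hf hk1 hk2
    obtain ⟨m, hm, hmin⟩ := S.exists_min_image f (Finset.card_pos.mp (by omega))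
    rcases Nat.eq_zero_or_pos k with hk0 | hkpos
    · subst hk0
      refine ⟨m, hm, ?_, ?_⟩
      · rw [cnt_empty_pred (fun p hp h => absurd (hmin p hp) (not_le.mpr h))]
      · exact cnt_singleton_pred hm (fun p hp =>
          ⟨fun h => by
            by_contra hne
            exact hf p hp m hm hne (le_antisymm h (hmin p hp)),
           fun h => by rw [h]⟩)
    · have hcard : S.erase m ⊆ S := Finset.erase_subset _ _
      obtain ⟨p, hp, h1, h2⟩ := ih (S.erase m)
        (fun a ha b hb => hf a (hcard ha) b (hcard hb))
        hkpos (by rw [Finset.card_erase_of_mem hm]; omega)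
      have hpm : p ≠ m := Finset.ne_of_mem_erase hp
      have hpS : p ∈ S := hcard hp
      have hfm : f m < f p :=
        lt_of_le_of_ne (hmin p hpS) (fun h => hf m hm p hpS (Ne.symm hpm) h)
      have hins : S = insert m (S.erase m) := (Finset.insert_erase hm).symm
      refine ⟨p, hpS, ?_, ?_⟩
      · rw [hins, cnt_insert_true (Finset.notMem_erase m S) hfm]
        omega
      · rw [hins, cnt_insert_true (Finset.notMem_erase m S) hfm.le]
        omega


end CntAux

namespace CntAux
variable {α : Type*} {S : Finset α} {q r t : α → Prop}

open Classical in
lemma cnt_split (h : ∀ p ∈ S, t p → q p ∨ r p) : cnt S t ≤ cnt S q + cnt S r := by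
  have e0 : cnt (S.filter t) q + cnt (S.filter t) (fun p => ¬ q p) = (S.filter t).card :=
    cnt_compl
  have e1 : cnt (S.filter t) q = cnt S (fun p => t p ∧ q p) := cnt_filter_eq _
  have e2 : cnt (S.filter t) (fun p => ¬ q p) = cnt S (fun p => t p ∧ ¬ q p) := cnt_filter_eq _
  have e3 : (S.filter t).card = cnt S t := (cnt_eq _).symm
  have e4 : cnt S (fun p => t p ∧ q p) ≤ cnt S q := cnt_mono (fun p _ hh => hh.2)
  have e5 : cnt S (fun p => t p ∧ ¬ q p) ≤ cnt S r :=
    cnt_mono (fun p hp hh => (h p hp hh.1).resolve_left hh.2)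
  omega

open Classical in
lemma cnt_two_le (hqr : ∀ p ∈ S, ¬(q p ∧ r p)) (hqt : ∀ p ∈ S, q p → t p)
    (hrt : ∀ p ∈ S, r p → t p) : cnt S q + cnt S r ≤ cnt S t := by
  have e1 : cnt (S.filter t) q = cnt S q :=
    (cnt_filter_eq _).trans (cnt_congr (fun p hp =>
      ⟨fun h => h.2, fun hq => ⟨hqt p hp hq, hq⟩⟩))
  have e2 : cnt (S.filter t) r = cnt S r :=
    (cnt_filter_eq _).trans (cnt_congr (fun p hp =>
      ⟨fun h => h.2, fun hr => ⟨hrt p hp hr, hr⟩⟩))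
  have h2 : cnt (S.filter t) q + cnt (S.filter t) r ≤ (S.filter t).card :=
    cnt_two (fun p hp => hqr p (Finset.mem_filter.mp hp).1)
  have h3 : (S.filter t).card = cnt S t := (cnt_eq _).symm
  omega

variable {f : α → ℝ} {v w : ℝ}

open Classical in
lemma param_le_of_cnt (h : cnt S (fun p => f p < w) < cnt S (fun p => f p ≤ v)) : w ≤ v := by
  by_contra hc
  push_neg at hc
  exact absurd (cnt_mono (S := S) (q := fun p => f p ≤ v) (r := fun p => f p < w)
    (fun p _ hpv => lt_of_le_of_lt hpv hc)) (not_le.mpr h)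

open Classical in
lemma param_le_of_cnt' (h : cnt S (fun p => w < f p) < cnt S (fun p => v ≤ f p)) : v ≤ w := by
  by_contra hc
  push_neg at hc
  exact absurd (cnt_mono (S := S) (q := fun p => v ≤ f p) (r := fun p => w < f p)
    (fun p _ hpv => lt_of_lt_of_le hc hpv)) (not_le.mpr h)

open Classical in
lemma param_lt_of_cnt (h : cnt S (fun p => f p ≤ v) < cnt S (fun p => f p ≤ w)) : v < w := by
  by_contra hc
  push_neg at hc
  exact absurd (cnt_mono (S := S) (q := fun p => f p ≤ w) (r := fun p => f p ≤ v)
    (fun p _ hpw => le_trans hpw hc)) (not_le.mpr h)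

open Classical in
lemma cnt_lt_add_ge : cnt S (fun p => f p < v) + cnt S (fun p => v ≤ f p) = S.card := by
  have := cnt_compl (S := S) (q := fun p => f p < v)
  rw [cnt_congr (S := S) (q := fun p => ¬ (f p < v)) (r := fun p => v ≤ f p)
    (fun p _ => not_lt)] at this
  exact this

open Classical in
lemma cnt_le_add_gt : cnt S (fun p => f p ≤ v) + cnt S (fun p => v < f p) = S.card := by
  have := cnt_compl (S := S) (q := fun p => f p ≤ v)
  rw [cnt_congr (S := S) (q := fun p => ¬ (f p ≤ v)) (r := fun p => v < f p)
    (fun p _ => not_le)] at this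
  exact this

open Classical in
lemma cnt_cover3 (h : ∀ p ∈ S, q p ∨ r p ∨ t p) : S.card ≤ cnt S q + cnt S r + cnt S t := by
  have h1 : S.card ≤ cnt S q + cnt S (fun p => r p ∨ t p) := cnt_cover2 h
  have h2 : cnt S (fun p => r p ∨ t p) ≤ cnt S r + cnt S t := cnt_split (fun p _ hh => hh)
  omega

end CntAux

noncomputable def mkPt (x y : ℝ) : EuclideanSpace ℝ (Fin 2) := (WithLp.equiv 2 (Fin 2 → ℝ)).symm ![x, y]

@[simp] lemma mkPt_zero (x y : ℝ) : mkPt x y 0 = x := by simp [mkPt]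
@[simp] lemma mkPt_one (x y : ℝ) : mkPt x y 1 = y := by simp [mkPt]

open CntAux in
open Classical in
lemma ptsIn_eq (P : Finset (EuclideanSpace ℝ (Fin 2))) (B : Set (EuclideanSpace ℝ (Fin 2))) :
    ptsIn P B = cnt P (· ∈ B) := by
  unfold ptsIn cnt
  rw [show ((P : Set (EuclideanSpace ℝ (Fin 2))) ∩ B) = ↑(P.filter (· ∈ B)) from by ext p; simp,
    Set.ncard_coe_finset]

set_option maxHeartbeats 2000000 in
open CntAux in
lemma core (P : Finset (EuclideanSpace ℝ (Fin 2))) (n : ℕ) (hn : P.card = n)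
    (x₁ x₂ y₁ y₂ : ℝ) (K : ℕ)
    (hK1 : n ≤ K + 4*n/7)
    (hK2 : n ≤ 2*K + 3*n/7)
    (h1 : cnt P (fun p => p 1 < y₁) ≤ 3*n/7)
    (h2 : cnt P (fun p => y₂ < p 1) ≤ 3*n/7)
    (h3 : cnt P (fun p => y₁ < p 1 ∧ p 1 < y₂) ≤ 3*n/7)
    (h4 : K ≤ cnt P (fun p => p 1 ≤ y₁))
    (h5 : K ≤ cnt P (fun p => y₁ ≤ p 1))
    (h6 : K ≤ cnt P (fun p => p 1 ≤ y₂))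
    (h7 : K ≤ cnt P (fun p => y₂ ≤ p 1))
    (h8 : cnt P (fun p => p 1 < y₂ ∧ p 0 < x₁) ≤ 3*n/7)
    (h9 : cnt P (fun p => p 1 < y₂ ∧ x₁ < p 0) ≤ 3*n/7)
    (h10 : cnt P (fun p => y₁ < p 1 ∧ p 0 < x₂) ≤ 3*n/7)
    (h11 : cnt P (fun p => y₁ < p 1 ∧ x₂ < p 0) ≤ 3*n/7)
    (h12 : K ≤ cnt P (fun p => p 0 ≤ x₁))
    (h13 : K ≤ cnt P (fun p => x₁ ≤ p 0))
    (h14 : K ≤ cnt P (fun p => p 0 ≤ x₂))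
    (h15 : K ≤ cnt P (fun p => x₂ ≤ p 0))
    (h16 : cnt P (fun p => p 0 < x₁) ≤ 3*n/7 ∨ cnt P (fun p => p 0 < x₂) ≤ 3*n/7)
    (h17 : cnt P (fun p => x₁ < p 0) ≤ 3*n/7 ∨ cnt P (fun p => x₂ < p 0) ≤ 3*n/7) :
    (∀ B : Set (EuclideanSpace ℝ (Fin 2)), IsBox B →
        (ptsIn P B : ℝ) > (3 / 7) * n → mkPt x₁ y₁ ∈ B ∨ mkPt x₂ y₂ ∈ B) ∧
    (∀ B : Set (EuclideanSpace ℝ (Fin 2)), IsBox B →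
        (ptsIn P B : ℝ) > (4 / 7) * n → mkPt x₁ y₁ ∈ B ∧ mkPt x₂ y₂ ∈ B) := by
  constructor
  · rintro B ⟨a, b, rfl⟩ hc
    set c := cnt P (fun p => (a 0 ≤ p 0 ∧ p 0 ≤ b 0) ∧ (a 1 ≤ p 1 ∧ p 1 ≤ b 1)) with hcdef
    have hmem : ∀ p : EuclideanSpace ℝ (Fin 2),
        p ∈ {x : EuclideanSpace ℝ (Fin 2) | ∀ i, x i ∈ Set.Icc (a i) (b i)} ↔
        ((a 0 ≤ p 0 ∧ p 0 ≤ b 0) ∧ (a 1 ≤ p 1 ∧ p 1 ≤ b 1)) := by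
      intro p
      simp only [Set.mem_setOf_eq, Set.mem_Icc, Fin.forall_fin_two]
    have hceq : ptsIn P {x : EuclideanSpace ℝ (Fin 2) | ∀ i, x i ∈ Set.Icc (a i) (b i)} = c := by
      rw [ptsIn_eq]
      exact cnt_congr (fun p _ => hmem p)
    rw [hceq] at hc
    have hc7 : (7:ℝ) * c > 3 * n := by push_cast at hc ⊢; linarith
    have hcn : 3 * n < 7 * c := by exact_mod_cast hc7
    have hcT : 3*n/7 < c := (Nat.div_lt_iff_lt_mul (by norm_num)).mpr (by linarith)
    by_contra hcon
    push_neg at hcon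
    obtain ⟨hnp1, hnp2⟩ := hcon
    rw [hmem] at hnp1 hnp2
    simp only [mkPt_zero, mkPt_one] at hnp1 hnp2
    have hp1 : x₁ < a 0 ∨ b 0 < x₁ ∨ y₁ < a 1 ∨ b 1 < y₁ := by
      by_contra hcon2; push_neg at hcon2
      exact hnp1 ⟨⟨hcon2.1, hcon2.2.1⟩, ⟨hcon2.2.2.1, hcon2.2.2.2⟩⟩
    have hp2 : x₂ < a 0 ∨ b 0 < x₂ ∨ y₂ < a 1 ∨ b 1 < y₂ := by
      by_contra hcon2; push_neg at hcon2
      exact hnp2 ⟨⟨hcon2.1, hcon2.2.1⟩, ⟨hcon2.2.2.1, hcon2.2.2.2⟩⟩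
    rcases hp1 with hx1l | hx1r | hy1l | hy1r
    · -- x₁ < a 0
      rcases hp2 with hx2l | hx2r | hy2l | hy2r
      · rcases h17 with h17a | h17b
        · have hle := cnt_mono (S := P)
            (q := fun p => (a 0 ≤ p 0 ∧ p 0 ≤ b 0) ∧ (a 1 ≤ p 1 ∧ p 1 ≤ b 1))
            (r := fun p => x₁ < p 0) (fun p _ hb => lt_of_lt_of_le hx1l hb.1.1)
          linarith [hle, h17a]
        · have hle := cnt_mono (S := P)
            (q := fun p => (a 0 ≤ p 0 ∧ p 0 ≤ b 0) ∧ (a 1 ≤ p 1 ∧ p 1 ≤ b 1))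
            (r := fun p => x₂ < p 0) (fun p _ hb => lt_of_lt_of_le hx2l hb.1.1)
          linarith [hle, h17b]
      · -- x₁ < a 0, b 0 < x₂ : middle strip
        by_cases hab : a 0 ≤ b 0
        · have hthree := cnt_three (S := P)
            (q := fun p => (a 0 ≤ p 0 ∧ p 0 ≤ b 0) ∧ (a 1 ≤ p 1 ∧ p 1 ≤ b 1))
            (r := fun p => p 0 ≤ x₁) (t := fun p => x₂ ≤ p 0)
            (fun p _ h => absurd (le_trans h.1.1.1 h.2) (not_le.mpr hx1l))
            (fun p _ h => absurd (le_trans h.2 h.1.1.2) (not_le.mpr hx2r))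
            (fun p _ h => absurd (le_trans h.2 h.1)
              (not_le.mpr (lt_trans (lt_of_lt_of_le hx1l hab) hx2r)))
          rw [hn] at hthree
          linarith [hthree, h12, h15, hK2]
        · push_neg at hab
          have hc0 : c = 0 := cnt_empty_pred
            (fun p _ h => absurd (le_trans h.1.1 h.1.2) (not_le.mpr hab))
          linarith [hc0]
      · have hle := cnt_mono (S := P)
          (q := fun p => (a 0 ≤ p 0 ∧ p 0 ≤ b 0) ∧ (a 1 ≤ p 1 ∧ p 1 ≤ b 1))
          (r := fun p => y₂ < p 1) (fun p _ hb => lt_of_lt_of_le hy2l hb.2.1)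
        linarith [hle, h2]
      · have hle := cnt_mono (S := P)
          (q := fun p => (a 0 ≤ p 0 ∧ p 0 ≤ b 0) ∧ (a 1 ≤ p 1 ∧ p 1 ≤ b 1))
          (r := fun p => p 1 < y₂ ∧ x₁ < p 0)
          (fun p _ hb => ⟨lt_of_le_of_lt hb.2.2 hy2r, lt_of_lt_of_le hx1l hb.1.1⟩)
        linarith [hle, h9]
    · -- b 0 < x₁
      rcases hp2 with hx2l | hx2r | hy2l | hy2r
      · by_cases hab : a 0 ≤ b 0
        · have hthree := cnt_three (S := P)
            (q := fun p => (a 0 ≤ p 0 ∧ p 0 ≤ b 0) ∧ (a 1 ≤ p 1 ∧ p 1 ≤ b 1))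
            (r := fun p => p 0 ≤ x₂) (t := fun p => x₁ ≤ p 0)
            (fun p _ h => absurd (le_trans h.1.1.1 h.2) (not_le.mpr hx2l))
            (fun p _ h => absurd (le_trans h.2 h.1.1.2) (not_le.mpr hx1r))
            (fun p _ h => absurd (le_trans h.2 h.1)
              (not_le.mpr (lt_trans (lt_of_lt_of_le hx2l hab) hx1r)))
          rw [hn] at hthree
          linarith [hthree, h14, h13, hK2]
        · push_neg at hab
          have hc0 : c = 0 := cnt_empty_pred
            (fun p _ h => absurd (le_trans h.1.1 h.1.2) (not_le.mpr hab))
          linarith [hc0]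
      · rcases h16 with h16a | h16b
        · have hle := cnt_mono (S := P)
            (q := fun p => (a 0 ≤ p 0 ∧ p 0 ≤ b 0) ∧ (a 1 ≤ p 1 ∧ p 1 ≤ b 1))
            (r := fun p => p 0 < x₁) (fun p _ hb => lt_of_le_of_lt hb.1.2 hx1r)
          linarith [hle, h16a]
        · have hle := cnt_mono (S := P)
            (q := fun p => (a 0 ≤ p 0 ∧ p 0 ≤ b 0) ∧ (a 1 ≤ p 1 ∧ p 1 ≤ b 1))
            (r := fun p => p 0 < x₂) (fun p _ hb => lt_of_le_of_lt hb.1.2 hx2r)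
          linarith [hle, h16b]
      · have hle := cnt_mono (S := P)
          (q := fun p => (a 0 ≤ p 0 ∧ p 0 ≤ b 0) ∧ (a 1 ≤ p 1 ∧ p 1 ≤ b 1))
          (r := fun p => y₂ < p 1) (fun p _ hb => lt_of_lt_of_le hy2l hb.2.1)
        linarith [hle, h2]
      · have hle := cnt_mono (S := P)
          (q := fun p => (a 0 ≤ p 0 ∧ p 0 ≤ b 0) ∧ (a 1 ≤ p 1 ∧ p 1 ≤ b 1))
          (r := fun p => p 1 < y₂ ∧ p 0 < x₁)
          (fun p _ hb => ⟨lt_of_le_of_lt hb.2.2 hy2r, lt_of_le_of_lt hb.1.2 hx1r⟩)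
        linarith [hle, h8]
    · -- y₁ < a 1
      rcases hp2 with hx2l | hx2r | hy2l | hy2r
      · have hle := cnt_mono (S := P)
          (q := fun p => (a 0 ≤ p 0 ∧ p 0 ≤ b 0) ∧ (a 1 ≤ p 1 ∧ p 1 ≤ b 1))
          (r := fun p => y₁ < p 1 ∧ x₂ < p 0)
          (fun p _ hb => ⟨lt_of_lt_of_le hy1l hb.2.1, lt_of_lt_of_le hx2l hb.1.1⟩)
        linarith [hle, h11]
      · have hle := cnt_mono (S := P)
          (q := fun p => (a 0 ≤ p 0 ∧ p 0 ≤ b 0) ∧ (a 1 ≤ p 1 ∧ p 1 ≤ b 1))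
          (r := fun p => y₁ < p 1 ∧ p 0 < x₂)
          (fun p _ hb => ⟨lt_of_lt_of_le hy1l hb.2.1, lt_of_le_of_lt hb.1.2 hx2r⟩)
        linarith [hle, h10]
      · have hle := cnt_mono (S := P)
          (q := fun p => (a 0 ≤ p 0 ∧ p 0 ≤ b 0) ∧ (a 1 ≤ p 1 ∧ p 1 ≤ b 1))
          (r := fun p => y₂ < p 1) (fun p _ hb => lt_of_lt_of_le hy2l hb.2.1)
        linarith [hle, h2]
      · have hle := cnt_mono (S := P)
          (q := fun p => (a 0 ≤ p 0 ∧ p 0 ≤ b 0) ∧ (a 1 ≤ p 1 ∧ p 1 ≤ b 1))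
          (r := fun p => y₁ < p 1 ∧ p 1 < y₂)
          (fun p _ hb => ⟨lt_of_lt_of_le hy1l hb.2.1, lt_of_le_of_lt hb.2.2 hy2r⟩)
        linarith [hle, h3]
    · have hle := cnt_mono (S := P)
        (q := fun p => (a 0 ≤ p 0 ∧ p 0 ≤ b 0) ∧ (a 1 ≤ p 1 ∧ p 1 ≤ b 1))
        (r := fun p => p 1 < y₁) (fun p _ hb => lt_of_le_of_lt hb.2.2 hy1r)
      linarith [hle, h1]
  · rintro B ⟨a, b, rfl⟩ hc
    set c := cnt P (fun p => (a 0 ≤ p 0 ∧ p 0 ≤ b 0) ∧ (a 1 ≤ p 1 ∧ p 1 ≤ b 1)) with hcdef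
    have hmem : ∀ p : EuclideanSpace ℝ (Fin 2),
        p ∈ {x : EuclideanSpace ℝ (Fin 2) | ∀ i, x i ∈ Set.Icc (a i) (b i)} ↔
        ((a 0 ≤ p 0 ∧ p 0 ≤ b 0) ∧ (a 1 ≤ p 1 ∧ p 1 ≤ b 1)) := by
      intro p
      simp only [Set.mem_setOf_eq, Set.mem_Icc, Fin.forall_fin_two]
    have hceq : ptsIn P {x : EuclideanSpace ℝ (Fin 2) | ∀ i, x i ∈ Set.Icc (a i) (b i)} = c := by
      rw [ptsIn_eq]
      exact cnt_congr (fun p _ => hmem p)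
    rw [hceq] at hc
    have hc7 : (7:ℝ) * c > 4 * n := by push_cast at hc ⊢; linarith
    have hcn : 4 * n < 7 * c := by exact_mod_cast hc7
    have hcT : 4*n/7 < c := (Nat.div_lt_iff_lt_mul (by norm_num)).mpr (by linarith)
    have hbndA : ∀ (q : EuclideanSpace ℝ (Fin 2) → Prop),
        (∀ p, ((a 0 ≤ p 0 ∧ p 0 ≤ b 0) ∧ (a 1 ≤ p 1 ∧ p 1 ≤ b 1)) → q p → False) →
        K ≤ cnt P q → False := by
      intro q hq hcnt
      have hdisj : c + cnt P q ≤ n := by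
        rw [← hn]
        exact cnt_two (fun p _ h => hq p h.1 h.2)
      linarith [hdisj, hcnt, hK1]
    have hm1 : a 0 ≤ x₁ := by
      by_contra hlt; push_neg at hlt
      exact hbndA (fun p => p 0 ≤ x₁)
        (fun p hb hw => absurd (le_trans hb.1.1 hw) (not_le.mpr hlt)) h12
    have hm2 : x₁ ≤ b 0 := by
      by_contra hlt; push_neg at hlt
      exact hbndA (fun p => x₁ ≤ p 0)
        (fun p hb hw => absurd (le_trans hw hb.1.2) (not_le.mpr hlt)) h13
    have hm3 : a 1 ≤ y₁ := by
      by_contra hlt; push_neg at hlt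
      exact hbndA (fun p => p 1 ≤ y₁)
        (fun p hb hw => absurd (le_trans hb.2.1 hw) (not_le.mpr hlt)) h4
    have hm4 : y₁ ≤ b 1 := by
      by_contra hlt; push_neg at hlt
      exact hbndA (fun p => y₁ ≤ p 1)
        (fun p hb hw => absurd (le_trans hw hb.2.2) (not_le.mpr hlt)) h5
    have hm5 : a 0 ≤ x₂ := by
      by_contra hlt; push_neg at hlt
      exact hbndA (fun p => p 0 ≤ x₂)
        (fun p hb hw => absurd (le_trans hb.1.1 hw) (not_le.mpr hlt)) h14
    have hm6 : x₂ ≤ b 0 := by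
      by_contra hlt; push_neg at hlt
      exact hbndA (fun p => x₂ ≤ p 0)
        (fun p hb hw => absurd (le_trans hw hb.1.2) (not_le.mpr hlt)) h15
    have hm7 : a 1 ≤ y₂ := by
      by_contra hlt; push_neg at hlt
      exact hbndA (fun p => p 1 ≤ y₂)
        (fun p hb hw => absurd (le_trans hb.2.1 hw) (not_le.mpr hlt)) h6
    have hm8 : y₂ ≤ b 1 := by
      by_contra hlt; push_neg at hlt
      exact hbndA (fun p => y₂ ≤ p 1)
        (fun p hb hw => absurd (le_trans hw hb.2.2) (not_le.mpr hlt)) h7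
    constructor
    · rw [show (mkPt x₁ y₁ ∈ {x : EuclideanSpace ℝ (Fin 2) | ∀ i, x i ∈ Set.Icc (a i) (b i)})
          ↔ _ from hmem (mkPt x₁ y₁)]
      simp only [mkPt_zero, mkPt_one]
      exact ⟨⟨hm1, hm2⟩, ⟨hm3, hm4⟩⟩
    · rw [show (mkPt x₂ y₂ ∈ {x : EuclideanSpace ℝ (Fin 2) | ∀ i, x i ∈ Set.Icc (a i) (b i)})
          ↔ _ from hmem (mkPt x₂ y₂)]
      simp only [mkPt_zero, mkPt_one]
      exact ⟨⟨hm5, hm6⟩, ⟨hm7, hm8⟩⟩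

open CntAux in
set_option maxHeartbeats 4000000 in
/-- weighted (3/7, 4/7)-net of size 2 for axis-parallel boxes in the
plane. -/
theorem weighted_net_boxes_two_dim (P : Finset (EuclideanSpace ℝ (Fin 2)))
    (n : ℕ) (hn : P.card = n) (hgp : GeneralPositionBoxes P) :
    ∃ p₁ p₂ : EuclideanSpace ℝ (Fin 2),
      (∀ B : Set (EuclideanSpace ℝ (Fin 2)), IsBox B →
        (ptsIn P B : ℝ) > (3 / 7) * n → p₁ ∈ B ∨ p₂ ∈ B) ∧
      (∀ B : Set (EuclideanSpace ℝ (Fin 2)), IsBox B →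
        (ptsIn P B : ℝ) > (4 / 7) * n → p₁ ∈ B ∧ p₂ ∈ B) := by
  classical
  have hfx : ∀ p ∈ P, ∀ q ∈ P, p ≠ q →
      (fun r : EuclideanSpace ℝ (Fin 2) => r 0) p ≠ (fun r : EuclideanSpace ℝ (Fin 2) => r 0) q :=
    fun p hp q hq hne => hgp p hp q hq hne 0
  have hfy : ∀ p ∈ P, ∀ q ∈ P, p ≠ q →
      (fun r : EuclideanSpace ℝ (Fin 2) => r 1) p ≠ (fun r : EuclideanSpace ℝ (Fin 2) => r 1) q :=
    fun p hp q hq hne => hgp p hp q hq hne 1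
  by_cases h0 : n = 0
  · subst h0
    have hz : ∀ q : EuclideanSpace ℝ (Fin 2) → Prop, cnt P q = 0 :=
      fun q => Nat.le_zero.mp (le_trans cnt_le_card (le_of_eq hn))
    refine ⟨mkPt 0 0, mkPt 0 0,
      core P 0 hn 0 0 0 0 0 (by norm_num) (by norm_num) ?_ ?_ ?_ ?_ ?_ ?_ ?_ ?_ ?_ ?_ ?_ ?_
        ?_ ?_ ?_ (Or.inl ?_) (Or.inl ?_)⟩ <;>
      first
        | exact le_trans cnt_le_card (le_of_eq hn)
        | exact Nat.zero_le _
  by_cases hodd : n = 1 ∨ n = 3 ∨ n = 5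
  · -- single median point, used twice
    obtain ⟨K, hKdef⟩ : ∃ K, K + 4*n/7 = n := ⟨n - 4*n/7, by omega⟩
    have m2 : 3*n/7 + 1 ≤ n := by omega
    have m3 : n ≤ 2*(3*n/7) + 1 := by omega
    have m4 : K ≤ 3*n/7 + 1 := by omega
    have m5 : K + 3*n/7 ≤ n := by omega
    have m6 : n ≤ K + 4*n/7 := by omega
    have m7 : n ≤ 2*K + 3*n/7 := by omega
    obtain ⟨qx, hqxP, hx1', hx2'⟩ := exists_kth (fun p : EuclideanSpace ℝ (Fin 2) => p 0)
      (3*n/7+1) P hfx (Nat.le_add_left 1 (3*n/7)) (by rw [hn]; exact m2)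
    obtain ⟨qy, hqyP, hy1', hy2'⟩ := exists_kth (fun p : EuclideanSpace ℝ (Fin 2) => p 1)
      (3*n/7+1) P hfy (Nat.le_add_left 1 (3*n/7)) (by rw [hn]; exact m2)
    set x₀ := qx 0 with hx₀
    set y₀ := qy 1 with hy₀
    have hx1 : cnt P (fun p => p 0 < x₀) + 1 = 3*n/7+1 := hx1'
    have hx2 : cnt P (fun p => p 0 ≤ x₀) = 3*n/7+1 := hx2'
    have hy1 : cnt P (fun p => p 1 < y₀) + 1 = 3*n/7+1 := hy1'
    have hy2 : cnt P (fun p => p 1 ≤ y₀) = 3*n/7+1 := hy2'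
    have cx : cnt P (fun p => p 0 ≤ x₀) + cnt P (fun p => x₀ < p 0) = P.card := cnt_le_add_gt
    have cy : cnt P (fun p => p 1 ≤ y₀) + cnt P (fun p => y₀ < p 1) = P.card := cnt_le_add_gt
    have cxg : cnt P (fun p => p 0 < x₀) + cnt P (fun p => x₀ ≤ p 0) = P.card := cnt_lt_add_ge
    have cyg : cnt P (fun p => p 1 < y₀) + cnt P (fun p => y₀ ≤ p 1) = P.card := cnt_lt_add_ge
    rw [hn] at cx cy cxg cyg
    have hygt : cnt P (fun p => y₀ < p 1) ≤ 3*n/7 := by linarith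
    have hxgt : cnt P (fun p => x₀ < p 0) ≤ 3*n/7 := by linarith
    have hmid0 : cnt P (fun p => y₀ < p 1 ∧ p 1 < y₀) = 0 :=
      cnt_empty_pred (fun p _ hh => (lt_asymm hh.1) hh.2)
    refine ⟨mkPt x₀ y₀, mkPt x₀ y₀,
      core P n hn x₀ x₀ y₀ y₀ K m6 m7
        (by linarith) hygt (by rw [hmid0]; exact Nat.zero_le _)
        (by linarith) (by linarith) (by linarith) (by linarith)
        (le_trans (cnt_mono (fun p _ h => h.1)) (by linarith))
        (le_trans (cnt_mono (fun p _ h => h.1)) (by linarith))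
        (le_trans (cnt_mono (fun p _ h => h.1)) hygt)
        (le_trans (cnt_mono (fun p _ h => h.1)) hygt)
        (by linarith) (by linarith) (by linarith) (by linarith)
        (Or.inl (by linarith)) (Or.inl hxgt)⟩
  · -- general case : n ∈ {2,4} ∪ [6,∞)
    obtain ⟨K, hKdef⟩ : ∃ K, K + 4*n/7 = n := ⟨n - 4*n/7, by omega⟩
    obtain ⟨ihi, hihi⟩ : ∃ i, i + K = n + 1 := ⟨n + 1 - K, by omega⟩
    obtain ⟨il, hil⟩ : ∃ i, i + 3*n/7 = 4*n/7 := ⟨4*n/7 - 3*n/7, by omega⟩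
    obtain ⟨iR, hiR⟩ : ∃ i, i + 3*n/7 = n := ⟨n - 3*n/7, by omega⟩
    have fK1 : 1 ≤ K := by omega
    have fKn : K ≤ n := by omega
    have fK2 : 2*K ≤ n := by omega
    have fKle : K ≤ 3*n/7 + 1 := by omega
    have fil1 : 1 ≤ il := by omega
    have fd34 : 3*n/7 + 1 ≤ 4*n/7 := by omega
    have fihi1 : 1 ≤ ihi := by omega
    have fihin : ihi ≤ n := by omega
    have fL : 3*n/7 + 1 ≤ n := by omega
    have fiR1 : 1 ≤ iR := by omega
    have fiRn : iR ≤ n := by omega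
    have g1 : 2*(4*n/7) ≤ 3*(3*n/7) + 2 := by omega
    have g2 : 4*n/7 ≤ 2*(3*n/7) + 1 := by omega
    have g3 : n + 4*n/7 ≤ 4*(3*n/7) + 3 := by omega
    have hK2' : n ≤ 2*K + 3*n/7 := by omega
    -- global order statistics
    obtain ⟨py1, hpy1, hy1lt', hy1le'⟩ := exists_kth (fun p : EuclideanSpace ℝ (Fin 2) => p 1)
      K P hfy fK1 (by rw [hn]; exact fKn)
    set y₁ := py1 1 with hy₁def
    have hy1lt : cnt P (fun p => p 1 < y₁) + 1 = K := hy1lt'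
    have hy1le : cnt P (fun p => p 1 ≤ y₁) = K := hy1le'
    obtain ⟨py2, hpy2, hy2lt', hy2le'⟩ := exists_kth (fun p : EuclideanSpace ℝ (Fin 2) => p 1)
      ihi P hfy fihi1 (by rw [hn]; exact fihin)
    set y₂ := py2 1 with hy₂def
    have hy2lt : cnt P (fun p => p 1 < y₂) + 1 = ihi := hy2lt'
    have hy2le : cnt P (fun p => p 1 ≤ y₂) = ihi := hy2le'
    obtain ⟨pAlo, hpAlo, hAlolt', hAlole'⟩ := exists_kth (fun p : EuclideanSpace ℝ (Fin 2) => p 0)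
      K P hfx fK1 (by rw [hn]; exact fKn)
    set Alo := pAlo 0 with hAlodef
    have hAlolt : cnt P (fun p => p 0 < Alo) + 1 = K := hAlolt'
    have hAlole : cnt P (fun p => p 0 ≤ Alo) = K := hAlole'
    obtain ⟨pAhi, hpAhi, hAhilt', hAhile'⟩ := exists_kth (fun p : EuclideanSpace ℝ (Fin 2) => p 0)
      ihi P hfx fihi1 (by rw [hn]; exact fihin)
    set Ahi := pAhi 0 with hAhidef
    have hAhilt : cnt P (fun p => p 0 < Ahi) + 1 = ihi := hAhilt'
    have hAhile : cnt P (fun p => p 0 ≤ Ahi) = ihi := hAhile'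
    obtain ⟨pL, hpL, hLlt', hLle'⟩ := exists_kth (fun p : EuclideanSpace ℝ (Fin 2) => p 0)
      (3*n/7+1) P hfx (Nat.le_add_left 1 (3*n/7)) (by rw [hn]; exact fL)
    set L := pL 0 with hLdef
    have hLlt : cnt P (fun p => p 0 < L) + 1 = 3*n/7+1 := hLlt'
    have hLle : cnt P (fun p => p 0 ≤ L) = 3*n/7+1 := hLle'
    obtain ⟨pR, hpR, hRlt', hRle'⟩ := exists_kth (fun p : EuclideanSpace ℝ (Fin 2) => p 0)
      iR P hfx fiR1 (by rw [hn]; exact fiRn)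
    set R := pR 0 with hRdef
    have hRlt : cnt P (fun p => p 0 < R) + 1 = iR := hRlt'
    have hRle : cnt P (fun p => p 0 ≤ R) = iR := hRle'
    -- complements (over P)
    have cy1 : cnt P (fun p => p 1 < y₁) + cnt P (fun p => y₁ ≤ p 1) = P.card := cnt_lt_add_ge
    have cy1' : cnt P (fun p => p 1 ≤ y₁) + cnt P (fun p => y₁ < p 1) = P.card := cnt_le_add_gt
    have cy2 : cnt P (fun p => p 1 < y₂) + cnt P (fun p => y₂ ≤ p 1) = P.card := cnt_lt_add_ge
    have cy2' : cnt P (fun p => p 1 ≤ y₂) + cnt P (fun p => y₂ < p 1) = P.card := cnt_le_add_gt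
    have cAhig : cnt P (fun p => p 0 < Ahi) + cnt P (fun p => Ahi ≤ p 0) = P.card := cnt_lt_add_ge
    have cAhig' : cnt P (fun p => p 0 ≤ Ahi) + cnt P (fun p => Ahi < p 0) = P.card := cnt_le_add_gt
    have cRg : cnt P (fun p => p 0 < R) + cnt P (fun p => R ≤ p 0) = P.card := cnt_lt_add_ge
    have cRg' : cnt P (fun p => p 0 ≤ R) + cnt P (fun p => R < p 0) = P.card := cnt_le_add_gt
    rw [hn] at cy1 cy1' cy2 cy2' cAhig cAhig' cRg cRg'
    have hy12 : y₁ < y₂ := param_lt_of_cnt (S := P)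
      (f := fun p : EuclideanSpace ℝ (Fin 2) => p 1) (v := y₁) (w := y₂)
      (by show cnt P (fun p => p 1 ≤ y₁) < cnt P (fun p => p 1 ≤ y₂); linarith)
    -- the strips
    set S₂ := P.filter (fun p => p 1 < y₂) with hS₂def
    set S₁ := P.filter (fun p => y₁ < p 1) with hS₁def
    have eS2 : S₂.card = cnt P (fun p => p 1 < y₂) := by
      rw [hS₂def]; exact (cnt_eq _).symm
    have eS1 : S₁.card = cnt P (fun p => y₁ < p 1) := by
      rw [hS₁def]; exact (cnt_eq _).symm
    have hfx2 : ∀ p ∈ S₂, ∀ q ∈ S₂, p ≠ q →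
        (fun r : EuclideanSpace ℝ (Fin 2) => r 0) p ≠ (fun r : EuclideanSpace ℝ (Fin 2) => r 0) q :=
      fun p hp q hq hne => hfx p (Finset.mem_filter.mp hp).1 q (Finset.mem_filter.mp hq).1 hne
    have hfx1 : ∀ p ∈ S₁, ∀ q ∈ S₁, p ≠ q →
        (fun r : EuclideanSpace ℝ (Fin 2) => r 0) p ≠ (fun r : EuclideanSpace ℝ (Fin 2) => r 0) q :=
      fun p hp q hq hne => hfx p (Finset.mem_filter.mp hp).1 q (Finset.mem_filter.mp hq).1 hne
    obtain ⟨plo, hplo, hllt', hlle'⟩ := exists_kth (fun p : EuclideanSpace ℝ (Fin 2) => p 0)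
      il S₂ hfx2 fil1 (by linarith)
    set l := plo 0 with hldef
    have hllt : cnt S₂ (fun p => p 0 < l) + 1 = il := hllt'
    have hlle : cnt S₂ (fun p => p 0 ≤ l) = il := hlle'
    obtain ⟨pu, hpu, hult', hule'⟩ := exists_kth (fun p : EuclideanSpace ℝ (Fin 2) => p 0)
      (3*n/7+1) S₂ hfx2 (Nat.le_add_left 1 (3*n/7)) (by linarith)
    set u := pu 0 with hudef
    have hult : cnt S₂ (fun p => p 0 < u) + 1 = 3*n/7+1 := hult'
    have hule : cnt S₂ (fun p => p 0 ≤ u) = 3*n/7+1 := hule'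
    obtain ⟨plo', hplo', hllt1', hlle1'⟩ := exists_kth (fun p : EuclideanSpace ℝ (Fin 2) => p 0)
      il S₁ hfx1 fil1 (by linarith)
    set l' := plo' 0 with hl'def
    have hl'lt : cnt S₁ (fun p => p 0 < l') + 1 = il := hllt1'
    have hl'le : cnt S₁ (fun p => p 0 ≤ l') = il := hlle1'
    obtain ⟨pu', hpu', hult1', hule1'⟩ := exists_kth (fun p : EuclideanSpace ℝ (Fin 2) => p 0)
      (3*n/7+1) S₁ hfx1 (Nat.le_add_left 1 (3*n/7)) (by linarith)
    set u' := pu' 0 with hu'def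
    have hu'lt : cnt S₁ (fun p => p 0 < u') + 1 = 3*n/7+1 := hult1'
    have hu'le : cnt S₁ (fun p => p 0 ≤ u') = 3*n/7+1 := hule1'
    -- complements inside strips
    have cS2l : cnt S₂ (fun p => p 0 < l) + cnt S₂ (fun p => l ≤ p 0) = S₂.card := cnt_lt_add_ge
    have cS2l' : cnt S₂ (fun p => p 0 ≤ l) + cnt S₂ (fun p => l < p 0) = S₂.card := cnt_le_add_gt
    have cS2u' : cnt S₂ (fun p => p 0 ≤ u) + cnt S₂ (fun p => u < p 0) = S₂.card := cnt_le_add_gt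
    have cS1l : cnt S₁ (fun p => p 0 < l') + cnt S₁ (fun p => l' ≤ p 0) = S₁.card := cnt_lt_add_ge
    have cS1l' : cnt S₁ (fun p => p 0 ≤ l') + cnt S₁ (fun p => l' < p 0) = S₁.card := cnt_le_add_gt
    have cS1u' : cnt S₁ (fun p => p 0 ≤ u') + cnt S₁ (fun p => u' < p 0) = S₁.card := cnt_le_add_gt
    -- transfers S₂/S₁ → P
    have trS2le : ∀ v : ℝ, cnt S₂ (fun p => p 0 ≤ v) = cnt P (fun p => p 1 < y₂ ∧ p 0 ≤ v) :=
      fun v => cnt_filter_eq _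
    have trS2lt : ∀ v : ℝ, cnt S₂ (fun p => p 0 < v) = cnt P (fun p => p 1 < y₂ ∧ p 0 < v) :=
      fun v => cnt_filter_eq _
    have trS2ge : ∀ v : ℝ, cnt S₂ (fun p => v ≤ p 0) = cnt P (fun p => p 1 < y₂ ∧ v ≤ p 0) :=
      fun v => cnt_filter_eq _
    have trS2gt : ∀ v : ℝ, cnt S₂ (fun p => v < p 0) = cnt P (fun p => p 1 < y₂ ∧ v < p 0) :=
      fun v => cnt_filter_eq _
    have trS1le : ∀ v : ℝ, cnt S₁ (fun p => p 0 ≤ v) = cnt P (fun p => y₁ < p 1 ∧ p 0 ≤ v) :=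
      fun v => cnt_filter_eq _
    have trS1lt : ∀ v : ℝ, cnt S₁ (fun p => p 0 < v) = cnt P (fun p => y₁ < p 1 ∧ p 0 < v) :=
      fun v => cnt_filter_eq _
    have trS1ge : ∀ v : ℝ, cnt S₁ (fun p => v ≤ p 0) = cnt P (fun p => y₁ < p 1 ∧ v ≤ p 0) :=
      fun v => cnt_filter_eq _
    have trS1gt : ∀ v : ℝ, cnt S₁ (fun p => v < p 0) = cnt P (fun p => y₁ < p 1 ∧ v < p 0) :=
      fun v => cnt_filter_eq _
    -- comparisons
    have cAlou : Alo ≤ u := param_le_of_cnt (S := P)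
      (f := fun p : EuclideanSpace ℝ (Fin 2) => p 0)
      (by show cnt P (fun p => p 0 < Alo) < cnt P (fun p => p 0 ≤ u)
          have t2 : cnt P (fun p => p 1 < y₂ ∧ p 0 ≤ u) ≤ cnt P (fun p => p 0 ≤ u) :=
            cnt_mono (fun p _ h => h.2)
          linarith [trS2le u])
    have cAlou' : Alo ≤ u' := param_le_of_cnt (S := P)
      (f := fun p : EuclideanSpace ℝ (Fin 2) => p 0)
      (by show cnt P (fun p => p 0 < Alo) < cnt P (fun p => p 0 ≤ u')
          have t2 : cnt P (fun p => y₁ < p 1 ∧ p 0 ≤ u') ≤ cnt P (fun p => p 0 ≤ u') :=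
            cnt_mono (fun p _ h => h.2)
          linarith [trS1le u'])
    have clu : l ≤ u := param_le_of_cnt (S := S₂)
      (f := fun p : EuclideanSpace ℝ (Fin 2) => p 0)
      (by show cnt S₂ (fun p => p 0 < l) < cnt S₂ (fun p => p 0 ≤ u); linarith)
    have cl'u' : l' ≤ u' := param_le_of_cnt (S := S₁)
      (f := fun p : EuclideanSpace ℝ (Fin 2) => p 0)
      (by show cnt S₁ (fun p => p 0 < l') < cnt S₁ (fun p => p 0 ≤ u'); linarith)
    have clAhi : l ≤ Ahi := param_le_of_cnt' (S := P)
      (f := fun p : EuclideanSpace ℝ (Fin 2) => p 0)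
      (by show cnt P (fun p => Ahi < p 0) < cnt P (fun p => l ≤ p 0)
          have t2 : cnt P (fun p => p 1 < y₂ ∧ l ≤ p 0) ≤ cnt P (fun p => l ≤ p 0) :=
            cnt_mono (fun p _ h => h.2)
          linarith [trS2ge l])
    have cl'Ahi : l' ≤ Ahi := param_le_of_cnt' (S := P)
      (f := fun p : EuclideanSpace ℝ (Fin 2) => p 0)
      (by show cnt P (fun p => Ahi < p 0) < cnt P (fun p => l' ≤ p 0)
          have t2 : cnt P (fun p => y₁ < p 1 ∧ l' ≤ p 0) ≤ cnt P (fun p => l' ≤ p 0) :=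
            cnt_mono (fun p _ h => h.2)
          linarith [trS1ge l'])
    have cAloL : Alo ≤ L := param_le_of_cnt (S := P)
      (f := fun p : EuclideanSpace ℝ (Fin 2) => p 0)
      (by show cnt P (fun p => p 0 < Alo) < cnt P (fun p => p 0 ≤ L); linarith)
    have cAloAhi : Alo ≤ Ahi := param_le_of_cnt (S := P)
      (f := fun p : EuclideanSpace ℝ (Fin 2) => p 0)
      (by show cnt P (fun p => p 0 < Alo) < cnt P (fun p => p 0 ≤ Ahi); linarith)
    have cRAhi : R ≤ Ahi := param_le_of_cnt (S := P)
      (f := fun p : EuclideanSpace ℝ (Fin 2) => p 0)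
      (by show cnt P (fun p => p 0 < R) < cnt P (fun p => p 0 ≤ Ahi); linarith)
    -- main choice of x₁ x₂
    have main : ∃ x₁ x₂ : ℝ, l ≤ x₁ ∧ x₁ ≤ u ∧ l' ≤ x₂ ∧ x₂ ≤ u' ∧
        Alo ≤ x₁ ∧ x₁ ≤ Ahi ∧ Alo ≤ x₂ ∧ x₂ ≤ Ahi ∧
        (x₁ ≤ L ∨ x₂ ≤ L) ∧ (R ≤ x₁ ∨ R ≤ x₂) := by
      -- pigeonhole lemmas
      have P1 : l ≤ L ∨ l' ≤ L := by
        by_contra hc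
        push_neg at hc
        have hcov := cnt_split (S := P) (t := fun p => p 0 ≤ L)
          (q := fun p => p 1 < y₂ ∧ p 0 ≤ L) (r := fun p => y₁ < p 1 ∧ p 0 ≤ L)
          (fun p _ h => (lt_or_ge y₁ (p 1)).elim (fun hh => Or.inr ⟨hh, h⟩)
            (fun hh => Or.inl ⟨lt_of_le_of_lt hh hy12, h⟩))
        have t2 : cnt S₂ (fun p => p 0 ≤ L) ≤ cnt S₂ (fun p => p 0 < l) :=
          cnt_mono (fun p _ h => lt_of_le_of_lt h hc.1)
        have t4 : cnt S₁ (fun p => p 0 ≤ L) ≤ cnt S₁ (fun p => p 0 < l') :=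
          cnt_mono (fun p _ h => lt_of_le_of_lt h hc.2)
        linarith [trS2le L, trS1le L]
      have P2 : R ≤ u ∨ R ≤ u' := by
        by_contra hc
        push_neg at hc
        have hcov := cnt_split (S := P) (t := fun p => R ≤ p 0)
          (q := fun p => p 1 < y₂ ∧ R ≤ p 0) (r := fun p => y₁ < p 1 ∧ R ≤ p 0)
          (fun p _ h => (lt_or_ge y₁ (p 1)).elim (fun hh => Or.inr ⟨hh, h⟩)
            (fun hh => Or.inl ⟨lt_of_le_of_lt hh hy12, h⟩))
        have t2 : cnt S₂ (fun p => R ≤ p 0) ≤ cnt S₂ (fun p => u < p 0) :=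
          cnt_mono (fun p _ h => lt_of_lt_of_le hc.1 h)
        have t4 : cnt S₁ (fun p => R ≤ p 0) ≤ cnt S₁ (fun p => u' < p 0) :=
          cnt_mono (fun p _ h => lt_of_lt_of_le hc.2 h)
        linarith [trS2ge R, trS1ge R]
      have P3 : l ≤ L ∨ R ≤ u := by
        by_contra hc
        push_neg at hc
        have t2 : cnt S₂ (fun p => p 0 ≤ L) ≤ cnt S₂ (fun p => p 0 < l) :=
          cnt_mono (fun p _ h => lt_of_le_of_lt h hc.1)
        have t3 : cnt S₂ (fun p => R ≤ p 0) ≤ cnt S₂ (fun p => u < p 0) :=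
          cnt_mono (fun p _ h => lt_of_lt_of_le hc.2 h)
        rcases lt_or_ge L R with hLR | hRL
        · have hthree := cnt_three (S := P) (q := fun p => p 0 ≤ L)
            (r := fun p => R ≤ p 0) (t := fun p => L < p 0 ∧ p 0 < R)
            (fun p _ h => absurd (lt_of_le_of_lt (le_trans h.2 h.1) hLR) (lt_irrefl R))
            (fun p _ h => absurd (lt_of_lt_of_le h.2.1 h.1) (lt_irrefl L))
            (fun p _ h => absurd (lt_of_lt_of_le h.2.2 h.1) (lt_irrefl (p 0)))
          rw [hn] at hthree
          have hcov3 := cnt_cover3 (S := S₂) (q := fun p => p 0 ≤ L)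
            (r := fun p => R ≤ p 0) (t := fun p => L < p 0 ∧ p 0 < R)
            (fun p _ => by
              rcases le_or_gt (p 0) L with h | h
              · exact Or.inl h
              rcases le_or_gt R (p 0) with h' | h'
              · exact Or.inr (Or.inl h')
              · exact Or.inr (Or.inr ⟨h, h'⟩))
          have tmid : cnt S₂ (fun p => L < p 0 ∧ p 0 < R) ≤
              cnt P (fun p => L < p 0 ∧ p 0 < R) := by
            rw [hS₂def]
            exact le_trans (le_of_eq (cnt_filter_eq _)) (cnt_mono (fun p _ h => h.2))
          linarith [trS2le L, trS2ge R]
        · have hcov2 := cnt_cover2 (S := S₂) (q := fun p => p 0 ≤ L)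
            (r := fun p => R ≤ p 0)
            (fun p _ => (le_or_gt (p 0) L).elim Or.inl
              (fun h => Or.inr (le_trans hRL h.le)))
          linarith
      have P4 : l' ≤ L ∨ R ≤ u' := by
        by_contra hc
        push_neg at hc
        have t2 : cnt S₁ (fun p => p 0 ≤ L) ≤ cnt S₁ (fun p => p 0 < l') :=
          cnt_mono (fun p _ h => lt_of_le_of_lt h hc.1)
        have t3 : cnt S₁ (fun p => R ≤ p 0) ≤ cnt S₁ (fun p => u' < p 0) :=
          cnt_mono (fun p _ h => lt_of_lt_of_le hc.2 h)
        rcases lt_or_ge L R with hLR | hRL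
        · have hthree := cnt_three (S := P) (q := fun p => p 0 ≤ L)
            (r := fun p => R ≤ p 0) (t := fun p => L < p 0 ∧ p 0 < R)
            (fun p _ h => absurd (lt_of_le_of_lt (le_trans h.2 h.1) hLR) (lt_irrefl R))
            (fun p _ h => absurd (lt_of_lt_of_le h.2.1 h.1) (lt_irrefl L))
            (fun p _ h => absurd (lt_of_lt_of_le h.2.2 h.1) (lt_irrefl (p 0)))
          rw [hn] at hthree
          have hcov3 := cnt_cover3 (S := S₁) (q := fun p => p 0 ≤ L)
            (r := fun p => R ≤ p 0) (t := fun p => L < p 0 ∧ p 0 < R)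
            (fun p _ => by
              rcases le_or_gt (p 0) L with h | h
              · exact Or.inl h
              rcases le_or_gt R (p 0) with h' | h'
              · exact Or.inr (Or.inl h')
              · exact Or.inr (Or.inr ⟨h, h'⟩))
          have tmid : cnt S₁ (fun p => L < p 0 ∧ p 0 < R) ≤
              cnt P (fun p => L < p 0 ∧ p 0 < R) := by
            rw [hS₁def]
            exact le_trans (le_of_eq (cnt_filter_eq _)) (cnt_mono (fun p _ h => h.2))
          linarith [trS1le L, trS1ge R]
        · have hcov2 := cnt_cover2 (S := S₁) (q := fun p => p 0 ≤ L)
            (r := fun p => R ≤ p 0)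
            (fun p _ => (le_or_gt (p 0) L).elim Or.inl
              (fun h => Or.inr (le_trans hRL h.le)))
          linarith
      by_cases hbr : l ≤ L ∧ R ≤ u'
      · exact ⟨max l Alo, min u' Ahi, le_max_left _ _, max_le clu cAlou,
          le_min cl'u' cl'Ahi, min_le_left _ _,
          le_max_right _ _, max_le clAhi cAloAhi,
          le_min cAlou' cAloAhi, min_le_right _ _,
          Or.inl (max_le hbr.1 cAloL), Or.inr (le_min hbr.2 cRAhi)⟩
      · have hbr2 : R ≤ u ∧ l' ≤ L := by
          rcases not_and_or.mp hbr with hb | hb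
          · exact ⟨P3.resolve_left hb, P1.resolve_left hb⟩
          · exact ⟨P2.resolve_right hb, P4.resolve_right hb⟩
        exact ⟨min u Ahi, max l' Alo, le_min clu clAhi, min_le_left _ _,
          le_max_left _ _, max_le cl'u' cAlou',
          le_min cAlou cAloAhi, min_le_right _ _,
          le_max_right _ _, max_le cl'Ahi cAloAhi,
          Or.inr (max_le hbr2.2 cAloL), Or.inl (le_min hbr2.1 cRAhi)⟩
    obtain ⟨x₁, x₂, hx1l, hx1u, hx2l', hx2u', hx1Alo, hx1Ahi, hx2Alo, hx2Ahi, hL16, hR17⟩ := main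
    -- now all h's for core
    have h1 : cnt P (fun p => p 1 < y₁) ≤ 3*n/7 := by linarith
    have h2 : cnt P (fun p => y₂ < p 1) ≤ 3*n/7 := by linarith
    have h3 : cnt P (fun p => y₁ < p 1 ∧ p 1 < y₂) ≤ 3*n/7 := by
      have hml := cnt_two_le (S := P) (q := fun p => p 1 ≤ y₁)
        (r := fun p => y₁ < p 1 ∧ p 1 < y₂) (t := fun p => p 1 < y₂)
        (fun p _ h => absurd h.2.1 (not_lt.mpr h.1))
        (fun p _ h => lt_of_le_of_lt h hy12)
        (fun p _ h => h.2)
      linarith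
    have h4 : K ≤ cnt P (fun p => p 1 ≤ y₁) := le_of_eq hy1le.symm
    have h5 : K ≤ cnt P (fun p => y₁ ≤ p 1) := by linarith
    have h6 : K ≤ cnt P (fun p => p 1 ≤ y₂) := by linarith
    have h7 : K ≤ cnt P (fun p => y₂ ≤ p 1) := by linarith
    have h8 : cnt P (fun p => p 1 < y₂ ∧ p 0 < x₁) ≤ 3*n/7 := by
      have t : cnt P (fun p => p 1 < y₂ ∧ p 0 < x₁) ≤ cnt P (fun p => p 1 < y₂ ∧ p 0 < u) :=
        cnt_mono (fun p _ h => ⟨h.1, lt_of_lt_of_le h.2 hx1u⟩)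
      linarith [trS2lt u]
    have h9 : cnt P (fun p => p 1 < y₂ ∧ x₁ < p 0) ≤ 3*n/7 := by
      have t : cnt P (fun p => p 1 < y₂ ∧ x₁ < p 0) ≤ cnt P (fun p => p 1 < y₂ ∧ l < p 0) :=
        cnt_mono (fun p _ h => ⟨h.1, lt_of_le_of_lt hx1l h.2⟩)
      linarith [trS2gt l]
    have h10 : cnt P (fun p => y₁ < p 1 ∧ p 0 < x₂) ≤ 3*n/7 := by
      have t : cnt P (fun p => y₁ < p 1 ∧ p 0 < x₂) ≤ cnt P (fun p => y₁ < p 1 ∧ p 0 < u') :=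
        cnt_mono (fun p _ h => ⟨h.1, lt_of_lt_of_le h.2 hx2u'⟩)
      linarith [trS1lt u']
    have h11 : cnt P (fun p => y₁ < p 1 ∧ x₂ < p 0) ≤ 3*n/7 := by
      have t : cnt P (fun p => y₁ < p 1 ∧ x₂ < p 0) ≤ cnt P (fun p => y₁ < p 1 ∧ l' < p 0) :=
        cnt_mono (fun p _ h => ⟨h.1, lt_of_le_of_lt hx2l' h.2⟩)
      linarith [trS1gt l']
    have h12 : K ≤ cnt P (fun p => p 0 ≤ x₁) := by
      have t : cnt P (fun p => p 0 ≤ Alo) ≤ cnt P (fun p => p 0 ≤ x₁) :=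
        cnt_mono (fun p _ h => le_trans h hx1Alo)
      linarith
    have h13 : K ≤ cnt P (fun p => x₁ ≤ p 0) := by
      have t : cnt P (fun p => Ahi ≤ p 0) ≤ cnt P (fun p => x₁ ≤ p 0) :=
        cnt_mono (fun p _ h => le_trans hx1Ahi h)
      linarith
    have h14 : K ≤ cnt P (fun p => p 0 ≤ x₂) := by
      have t : cnt P (fun p => p 0 ≤ Alo) ≤ cnt P (fun p => p 0 ≤ x₂) :=
        cnt_mono (fun p _ h => le_trans h hx2Alo)
      linarith
    have h15 : K ≤ cnt P (fun p => x₂ ≤ p 0) := by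
      have t : cnt P (fun p => Ahi ≤ p 0) ≤ cnt P (fun p => x₂ ≤ p 0) :=
        cnt_mono (fun p _ h => le_trans hx2Ahi h)
      linarith
    have h16 : cnt P (fun p => p 0 < x₁) ≤ 3*n/7 ∨ cnt P (fun p => p 0 < x₂) ≤ 3*n/7 := by
      rcases hL16 with h | h
      · left
        have t : cnt P (fun p => p 0 < x₁) ≤ cnt P (fun p => p 0 < L) :=
          cnt_mono (fun p _ hh => lt_of_lt_of_le hh h)
        linarith
      · right
        have t : cnt P (fun p => p 0 < x₂) ≤ cnt P (fun p => p 0 < L) :=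
          cnt_mono (fun p _ hh => lt_of_lt_of_le hh h)
        linarith
    have h17 : cnt P (fun p => x₁ < p 0) ≤ 3*n/7 ∨ cnt P (fun p => x₂ < p 0) ≤ 3*n/7 := by
      rcases hR17 with h | h
      · left
        have t : cnt P (fun p => x₁ < p 0) ≤ cnt P (fun p => R < p 0) :=
          cnt_mono (fun p _ hh => lt_of_le_of_lt h hh)
        linarith
      · right
        have t : cnt P (fun p => x₂ < p 0) ≤ cnt P (fun p => R < p 0) :=
          cnt_mono (fun p _ hh => lt_of_le_of_lt h hh)
        linarith
    exact ⟨mkPt x₁ y₁, mkPt x₂ y₂,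
      core P n hn x₁ x₂ y₁ y₂ K (le_of_eq hKdef.symm) hK2' h1 h2 h3 h4 h5 h6 h7 h8 h9 h10 h11
        h12 h13 h14 h15 h16 h17⟩
end

section
/- Let P be a finite set of n points in ℝ² and let l₁ be a horizontal line and l₂ a vertical line, each halving P (at most n/2 points strictly on each side). Then among the four closed quadrants determined by l₁ and l₂, there exist two opposite quadrants each containing at least n/4 points of P. -/
lemma ptsIn_eq_filter (P : Finset (EuclideanSpace ℝ (Fin 2)))
    (p : EuclideanSpace ℝ (Fin 2) → Prop) [DecidablePred p] :
    ptsIn P {x | p x} = (P.filter p).card := by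
  rw [ptsIn, ← Set.ncard_coe_finset]
  congr 1
  ext x
  simp [Finset.mem_filter]

lemma splitcard {α : Type*} (P : Finset α) (p q : α → Prop)
    [DecidablePred p] [DecidablePred q] :
    (P.filter fun x => p x ∧ q x).card + (P.filter fun x => p x ∧ ¬ q x).card
      = (P.filter p).card := by
  rw [← Finset.filter_filter, ← Finset.filter_filter,
    Finset.card_filter_add_card_filter_not]

lemma monocard {α : Type*} (P : Finset α) (p q : α → Prop)
    [DecidablePred p] [DecidablePred q] (h : ∀ x, p x → q x) :
    (P.filter p).card ≤ (P.filter q).card := by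
  apply Finset.card_le_card
  intro x hx
  rw [Finset.mem_filter] at hx ⊢
  exact ⟨hx.1, h _ hx.2⟩

lemma cardcomm {α : Type*} (P : Finset α) (p q : α → Prop)
    [DecidablePred p] [DecidablePred q] :
    (P.filter fun x => p x ∧ q x).card = (P.filter fun x => q x ∧ p x).card := by
  congr 1
  ext x
  simp only [Finset.mem_filter]
  tauto

/-- if the vertical line `x = a` and the horizontal line `y = b`
each halve `P` (at most `n/2` points strictly on each side), then two opposite
closed quadrants each contain at least `n/4` points of `P`. -/
theorem opposite_quadrants (P : Finset (EuclideanSpace ℝ (Fin 2)))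
    (n : ℕ) (hn : P.card = n) (a b : ℝ)
    (hL : (ptsIn P {x | x 0 < a} : ℝ) ≤ n / 2)
    (hR : (ptsIn P {x | x 0 > a} : ℝ) ≤ n / 2)
    (hB : (ptsIn P {x | x 1 < b} : ℝ) ≤ n / 2)
    (hT : (ptsIn P {x | x 1 > b} : ℝ) ≤ n / 2) :
    ((ptsIn P {x | x 0 ≤ a ∧ x 1 ≥ b} : ℝ) ≥ n / 4 ∧
      (ptsIn P {x | x 0 ≥ a ∧ x 1 ≤ b} : ℝ) ≥ n / 4) ∨
    ((ptsIn P {x | x 0 ≥ a ∧ x 1 ≥ b} : ℝ) ≥ n / 4 ∧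
      (ptsIn P {x | x 0 ≤ a ∧ x 1 ≤ b} : ℝ) ≥ n / 4) := by
  classical
  simp only [ptsIn_eq_filter] at hL hR hB hT ⊢
  -- names for half-plane counts
  -- partitions of P by the four lines
  have h1 : (P.filter fun x => x 0 < a).card + (P.filter fun x => x 0 ≥ a).card = n := by
    have e : (P.filter fun x => ¬ x 0 < a) = (P.filter fun x => x 0 ≥ a) := by
      ext x
      simp [Finset.mem_filter, not_lt]
    rw [← e, Finset.card_filter_add_card_filter_not, hn]
  have h2 : (P.filter fun x => x 0 > a).card + (P.filter fun x => x 0 ≤ a).card = n := by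
    have e : (P.filter fun x => ¬ x 0 > a) = (P.filter fun x => x 0 ≤ a) := by
      ext x
      simp [Finset.mem_filter, not_lt]
    rw [← e, Finset.card_filter_add_card_filter_not, hn]
  have h3 : (P.filter fun x => x 1 < b).card + (P.filter fun x => x 1 ≥ b).card = n := by
    have e : (P.filter fun x => ¬ x 1 < b) = (P.filter fun x => x 1 ≥ b) := by
      ext x
      simp [Finset.mem_filter, not_lt]
    rw [← e, Finset.card_filter_add_card_filter_not, hn]
  have h4 : (P.filter fun x => x 1 > b).card + (P.filter fun x => x 1 ≤ b).card = n := by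
    have e : (P.filter fun x => ¬ x 1 > b) = (P.filter fun x => x 1 ≤ b) := by
      ext x
      simp [Finset.mem_filter, not_lt]
    rw [← e, Finset.card_filter_add_card_filter_not, hn]
  -- UL split on left half
  have sUL : (P.filter fun x => x 0 ≤ a ∧ x 1 ≥ b).card
      + (P.filter fun x => x 0 ≤ a ∧ ¬ x 1 ≥ b).card
      = (P.filter fun x => x 0 ≤ a).card :=
    splitcard P (fun x => x 0 ≤ a) (fun x => x 1 ≥ b)
  -- LL split on left half; the complementary piece is inside UL
  have sLL : (P.filter fun x => x 0 ≤ a ∧ x 1 ≤ b).card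
      + (P.filter fun x => x 0 ≤ a ∧ ¬ x 1 ≤ b).card
      = (P.filter fun x => x 0 ≤ a).card :=
    splitcard P (fun x => x 0 ≤ a) (fun x => x 1 ≤ b)
  have mLL : (P.filter fun x => x 0 ≤ a ∧ ¬ x 1 ≤ b).card
      ≤ (P.filter fun x => x 0 ≤ a ∧ x 1 ≥ b).card :=
    monocard P _ _ (fun x h => ⟨h.1, le_of_lt (lt_of_not_ge h.2)⟩)
  -- UR split on top half; complementary piece is inside UL
  have sUR : (P.filter fun x => x 1 ≥ b ∧ x 0 ≥ a).card
      + (P.filter fun x => x 1 ≥ b ∧ ¬ x 0 ≥ a).card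
      = (P.filter fun x => x 1 ≥ b).card :=
    splitcard P (fun x => x 1 ≥ b) (fun x => x 0 ≥ a)
  have cUR : (P.filter fun x => x 1 ≥ b ∧ x 0 ≥ a).card
      = (P.filter fun x => x 0 ≥ a ∧ x 1 ≥ b).card :=
    cardcomm P _ _
  have mUR : (P.filter fun x => x 1 ≥ b ∧ ¬ x 0 ≥ a).card
      ≤ (P.filter fun x => x 0 ≤ a ∧ x 1 ≥ b).card :=
    monocard P _ _ (fun x h => ⟨le_of_lt (lt_of_not_ge h.2), h.1⟩)
  -- LR split on right half
  have sLR : (P.filter fun x => x 0 ≥ a ∧ x 1 ≤ b).card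
      + (P.filter fun x => x 0 ≥ a ∧ ¬ x 1 ≤ b).card
      = (P.filter fun x => x 0 ≥ a).card :=
    splitcard P (fun x => x 0 ≥ a) (fun x => x 1 ≤ b)
  -- UR split on right half; complementary piece is inside LR
  have sUR' : (P.filter fun x => x 0 ≥ a ∧ x 1 ≥ b).card
      + (P.filter fun x => x 0 ≥ a ∧ ¬ x 1 ≥ b).card
      = (P.filter fun x => x 0 ≥ a).card :=
    splitcard P (fun x => x 0 ≥ a) (fun x => x 1 ≥ b)
  have mUR' : (P.filter fun x => x 0 ≥ a ∧ ¬ x 1 ≥ b).card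
      ≤ (P.filter fun x => x 0 ≥ a ∧ x 1 ≤ b).card :=
    monocard P _ _ (fun x h => ⟨h.1, le_of_lt (lt_of_not_ge h.2)⟩)
  -- LL split on bottom half; complementary piece is inside LR
  have sLL' : (P.filter fun x => x 1 ≤ b ∧ x 0 ≤ a).card
      + (P.filter fun x => x 1 ≤ b ∧ ¬ x 0 ≤ a).card
      = (P.filter fun x => x 1 ≤ b).card :=
    splitcard P (fun x => x 1 ≤ b) (fun x => x 0 ≤ a)
  have cLL : (P.filter fun x => x 1 ≤ b ∧ x 0 ≤ a).card
      = (P.filter fun x => x 0 ≤ a ∧ x 1 ≤ b).card :=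
    cardcomm P _ _
  have mLL' : (P.filter fun x => x 1 ≤ b ∧ ¬ x 0 ≤ a).card
      ≤ (P.filter fun x => x 0 ≥ a ∧ x 1 ≤ b).card :=
    monocard P _ _ (fun x h => ⟨le_of_lt (lt_of_not_ge h.2), h.1⟩)
  -- cast everything to ℝ
  have H1 : ((P.filter fun x => x 0 < a).card : ℝ)
      + ((P.filter fun x => x 0 ≥ a).card : ℝ) = n := by exact_mod_cast h1
  have H2 : ((P.filter fun x => x 0 > a).card : ℝ)
      + ((P.filter fun x => x 0 ≤ a).card : ℝ) = n := by exact_mod_cast h2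
  have H3 : ((P.filter fun x => x 1 < b).card : ℝ)
      + ((P.filter fun x => x 1 ≥ b).card : ℝ) = n := by exact_mod_cast h3
  have H4 : ((P.filter fun x => x 1 > b).card : ℝ)
      + ((P.filter fun x => x 1 ≤ b).card : ℝ) = n := by exact_mod_cast h4
  have SUL : ((P.filter fun x => x 0 ≤ a ∧ x 1 ≥ b).card : ℝ)
      + ((P.filter fun x => x 0 ≤ a ∧ ¬ x 1 ≥ b).card : ℝ)
      = ((P.filter fun x => x 0 ≤ a).card : ℝ) := by exact_mod_cast sUL
  have SLL : ((P.filter fun x => x 0 ≤ a ∧ x 1 ≤ b).card : ℝ)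
      + ((P.filter fun x => x 0 ≤ a ∧ ¬ x 1 ≤ b).card : ℝ)
      = ((P.filter fun x => x 0 ≤ a).card : ℝ) := by exact_mod_cast sLL
  have MLL : ((P.filter fun x => x 0 ≤ a ∧ ¬ x 1 ≤ b).card : ℝ)
      ≤ ((P.filter fun x => x 0 ≤ a ∧ x 1 ≥ b).card : ℝ) := by exact_mod_cast mLL
  have SUR : ((P.filter fun x => x 0 ≥ a ∧ x 1 ≥ b).card : ℝ)
      + ((P.filter fun x => x 1 ≥ b ∧ ¬ x 0 ≥ a).card : ℝ)
      = ((P.filter fun x => x 1 ≥ b).card : ℝ) := by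
    rw [← cUR]; exact_mod_cast sUR
  have MUR : ((P.filter fun x => x 1 ≥ b ∧ ¬ x 0 ≥ a).card : ℝ)
      ≤ ((P.filter fun x => x 0 ≤ a ∧ x 1 ≥ b).card : ℝ) := by exact_mod_cast mUR
  have SLR : ((P.filter fun x => x 0 ≥ a ∧ x 1 ≤ b).card : ℝ)
      + ((P.filter fun x => x 0 ≥ a ∧ ¬ x 1 ≤ b).card : ℝ)
      = ((P.filter fun x => x 0 ≥ a).card : ℝ) := by exact_mod_cast sLR
  have SUR' : ((P.filter fun x => x 0 ≥ a ∧ x 1 ≥ b).card : ℝ)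
      + ((P.filter fun x => x 0 ≥ a ∧ ¬ x 1 ≥ b).card : ℝ)
      = ((P.filter fun x => x 0 ≥ a).card : ℝ) := by exact_mod_cast sUR'
  have MUR' : ((P.filter fun x => x 0 ≥ a ∧ ¬ x 1 ≥ b).card : ℝ)
      ≤ ((P.filter fun x => x 0 ≥ a ∧ x 1 ≤ b).card : ℝ) := by exact_mod_cast mUR'
  have SLL' : ((P.filter fun x => x 0 ≤ a ∧ x 1 ≤ b).card : ℝ)
      + ((P.filter fun x => x 1 ≤ b ∧ ¬ x 0 ≤ a).card : ℝ)
      = ((P.filter fun x => x 1 ≤ b).card : ℝ) := by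
    rw [← cLL]; exact_mod_cast sLL'
  have MLL' : ((P.filter fun x => x 1 ≤ b ∧ ¬ x 0 ≤ a).card : ℝ)
      ≤ ((P.filter fun x => x 0 ≥ a ∧ x 1 ≤ b).card : ℝ) := by exact_mod_cast mLL'
  by_cases hUL : ((P.filter fun x => x 0 ≤ a ∧ x 1 ≥ b).card : ℝ) ≥ n / 4
  · by_cases hLR : ((P.filter fun x => x 0 ≥ a ∧ x 1 ≤ b).card : ℝ) ≥ n / 4
    · exact Or.inl ⟨hUL, hLR⟩
    · push_neg at hLR
      refine Or.inr ⟨?_, ?_⟩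
      · linarith
      · linarith
  · push_neg at hUL
    refine Or.inr ⟨?_, ?_⟩
    · linarith
    · linarith
end
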